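/- Let X be a T₁ topological space, κ an infinite cardinal, and D a dense subset of the product space X^κ. Suppose X^κ contains a closed discrete subset of cardinality |D|. Then there is a dense subset E of X^κ such that |E| = |D|, the density of E as a subspace equals the density of D as a subspace (d(D) = d(E)), and E is a union of countably many closed discrete subsets of X^κ. -/

import Mathlib

open Cardinal Set

universe u

/-- A subset `D` of a topological space is closed discrete iff it is closed and
its subspace topology is discrete. -/
def ClosedDiscrete {X : Type u} [TopologicalSpace X] (D : Set X) : Prop :=
  IsClosed D ∧ DiscreteTopology D

/-- A space is `e`-separable iff it has a dense set which is a countable union of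
closed discrete sets. -/
def ESeparable (X : Type u) [TopologicalSpace X] : Prop :=
  ∃ D : ℕ → Set X, (∀ n, ClosedDiscrete (D n)) ∧ Dense (⋃ n, D n)

/-- The density of a space: the least cardinality of a dense subset. -/
noncomputable def density (X : Type u) [TopologicalSpace X] : Cardinal.{u} :=
  sInf {c | ∃ D : Set X, Dense D ∧ #D = c}

/-- The extent of a space: the supremum of the cardinalities of closed discrete subsets. -/
noncomputable def extent (X : Type u) [TopologicalSpace X] : Cardinal.{u} :=
  sSup {c | ∃ D : Set X, ClosedDiscrete D ∧ #D = c}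

/- ### Auxiliary lemmas -/

lemma ESep.density_le_of_dense {Y : Type u} [TopologicalSpace Y] {S : Set Y} (hS : Dense S) :
    density Y ≤ #S :=
  csInf_le' ⟨S, hS, rfl⟩

lemma ESep.exists_dense_card_density (Y : Type u) [TopologicalSpace Y] :
    ∃ S : Set Y, Dense S ∧ #S = density Y := by
  have hne : {c | ∃ S : Set Y, Dense S ∧ #S = c}.Nonempty :=
    ⟨#(univ : Set Y), univ, dense_univ, rfl⟩
  exact csInf_mem hne

lemma ESep.density_eq_of_homeomorph {Y Z : Type u} [TopologicalSpace Y] [TopologicalSpace Z]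
    (e : Y ≃ₜ Z) : density Y = density Z := by
  have key : ∀ (Y Z : Type u) [TopologicalSpace Y] [TopologicalSpace Z] (e : Y ≃ₜ Z),
      density Z ≤ density Y := by
    intro Y Z _ _ e
    obtain ⟨S, hS, hcard⟩ := ESep.exists_dense_card_density Y
    have hdense : Dense (e '' S) := by
      rw [dense_iff_closure_eq, ← e.image_closure, hS.closure_eq, image_univ,
        e.surjective.range_eq]
    calc density Z ≤ #(e '' S) := ESep.density_le_of_dense hdense
      _ = #S := mk_image_eq e.injective
      _ = density Y := hcard
  exact le_antisymm (key Z Y e.symm) (key Y Z e)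

lemma ESep.dense_val_preimage {W : Type u} [TopologicalSpace W] {A B : Set W}
    (hAB : A ⊆ B) (hA : Dense A) : Dense (Subtype.val ⁻¹' A : Set ↥B) := by
  intro x
  rw [closure_subtype, Subtype.image_preimage_coe, inter_eq_self_of_subset_right hAB]
  exact hA _

/-- Cardinality of finite powers. -/
lemma ESep.card_fun_le {α : Type u} (n : ℕ) {c : Cardinal.{u}} (hc : ℵ₀ ≤ c) (hα : #α ≤ c) :
    #(Fin n → α) ≤ c := by
  have h1 : #(Fin n → α) = #(ULift.{u} (Fin n) → α) :=
    mk_congr (Equiv.arrowCongr Equiv.ulift.symm (Equiv.refl α))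
  have hcardFin : #(ULift.{u} (Fin n)) = (n : Cardinal.{u}) := by simp
  calc #(Fin n → α) = #(ULift.{u} (Fin n) → α) := h1
    _ = #α ^ #(ULift.{u} (Fin n)) := (Cardinal.power_def _ _).symm
    _ = #α ^ (n : Cardinal.{u}) := by rw [hcardFin]
    _ ≤ c ^ (n : Cardinal.{u}) := Cardinal.power_le_power_right hα
    _ = c ^ n := by rw [Cardinal.power_natCast]
    _ ≤ c := Cardinal.power_nat_le hc

/-- A dense subset of an infinite T1 space is infinite (has cardinality `≥ ℵ₀`). -/
lemma ESep.aleph0_le_card_dense {Y : Type u} [TopologicalSpace Y] [T1Space Y] [Infinite Y]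
    {S : Set Y} (hS : Dense S) : ℵ₀ ≤ #S := by
  by_contra hlt
  push_neg at hlt
  have hfin : S.Finite := Set.finite_coe_iff.mp (Cardinal.lt_aleph0_iff_finite.mp hlt)
  have hSuniv : S = (Set.univ : Set Y) := by
    rw [← hS.closure_eq, hfin.isClosed.closure_eq]
  have hfinY : Finite Y := Set.finite_univ_iff.mp (hSuniv ▸ hfin)
  rw [← not_infinite_iff_finite] at hfinY
  exact hfinY inferInstance

/-- An isolating open set for a point of a closed discrete set. -/
lemma ESep.exists_isolating {Y : Type u} [TopologicalSpace Y] {C : Set Y}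
    (hCd : DiscreteTopology ↥C) (c : ↥C) : ∃ U : Set Y, IsOpen U ∧ U ∩ C = {(c : Y)} := by
  have hopen : IsOpen ({c} : Set ↥C) := isOpen_discrete _
  rw [isOpen_induced_iff] at hopen
  obtain ⟨U, hU, hUc⟩ := hopen
  refine ⟨U, hU, ?_⟩
  ext y
  constructor
  · rintro ⟨hyU, hyC⟩
    have : (⟨y, hyC⟩ : ↥C) ∈ (Subtype.val ⁻¹' U : Set ↥C) := hyU
    rw [hUc] at this
    simpa using congrArg Subtype.val this
  · rintro rfl
    have : c ∈ (Subtype.val ⁻¹' U : Set ↥C) := by rw [hUc]; rfl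
    exact ⟨this, c.2⟩

namespace ESep

section Construction

variable {Y : Type u} [TopologicalSpace Y] [T1Space Y]
variable (D M C : Set Y)

/-- Index type for the `n`-th piece. -/
def Pt (n : ℕ) : Type u := ↥D × (Fin n → ↥M)

variable {D M C}

/-- The point of `Option ℕ → Y` coded by `p`. -/
def Phi (h : ∀ n, Pt D M n ↪ ↥C) (n : ℕ) (p : Pt D M n) : Option ℕ → Y :=
  fun o => Option.elim o (↑p.1)
    (fun i => if hi : i < n then ↑(p.2 ⟨i, hi⟩) else ↑(h n p))

lemma Phi_none (h : ∀ n, Pt D M n ↪ ↥C) (n : ℕ) (p : Pt D M n) :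
    Phi h n p none = ↑p.1 := rfl

lemma Phi_some (h : ∀ n, Pt D M n ↪ ↥C) (n : ℕ) (p : Pt D M n) (i : ℕ) :
    Phi h n p (some i) = if hi : i < n then ↑(p.2 ⟨i, hi⟩) else ↑(h n p) := rfl

lemma Phi_tail (h : ∀ n, Pt D M n ↪ ↥C) (n : ℕ) (p : Pt D M n) :
    Phi h n p (some n) = ↑(h n p) := by
  rw [Phi_some, dif_neg (lt_irrefl n)]

lemma Phi_injective (h : ∀ n, Pt D M n ↪ ↥C) (n : ℕ) : Function.Injective (Phi h n) := by
  intro p q hpq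
  have := congrFun hpq (some n)
  rw [Phi_tail, Phi_tail] at this
  exact (h n).injective (Subtype.val_injective this)

lemma isClosed_range_Phi (h : ∀ n, Pt D M n ↪ ↥C) (hCc : IsClosed C)
    (hCd : DiscreteTopology ↥C) (n : ℕ) : IsClosed (range (Phi h n)) := by
  rw [← isOpen_compl_iff, isOpen_iff_forall_mem_open]
  intro w hw
  by_cases hwC : w (some n) ∈ C
  · obtain ⟨U, hU, hUC⟩ := ESep.exists_isolating hCd ⟨w (some n), hwC⟩
    by_cases hex : ∃ p : Pt D M n, ((h n p : Y)) = w (some n)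
    · obtain ⟨p, hp⟩ := hex
      have hne : w ≠ Phi h n p := fun e => hw ⟨p, e.symm⟩
      have hex2 : ∃ o, w o ≠ Phi h n p o := by
        by_contra hcon
        push_neg at hcon
        exact hne (funext hcon)
      obtain ⟨o, ho⟩ := hex2
      refine ⟨(fun v => v (some n)) ⁻¹' U ∩ (fun v => v o) ⁻¹' {Phi h n p o}ᶜ, ?_, ?_, ?_⟩
      · rintro v ⟨hv1, hv2⟩ ⟨q, rfl⟩
        have hmem : (h n q : Y) ∈ U ∩ C :=
          ⟨by simpa only [mem_preimage, Phi_tail] using hv1, (h n q).2⟩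
        rw [hUC, mem_singleton_iff] at hmem
        have hmem' : (h n q : Y) = w (some n) := hmem
        have hqp : q = p := (h n).injective (Subtype.val_injective (hmem'.trans hp.symm))
        subst hqp
        exact hv2 rfl
      · exact ((hU.preimage (continuous_apply (some n)))).inter
          ((isOpen_compl_singleton).preimage (continuous_apply o))
      · constructor
        · show w (some n) ∈ U
          have : w (some n) ∈ U ∩ C := by rw [hUC]; rfl
          exact this.1
        · exact ho
    · refine ⟨(fun v => v (some n)) ⁻¹' U, ?_, hU.preimage (continuous_apply (some n)), ?_⟩
      · rintro v hv ⟨q, rfl⟩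
        have hmem : (h n q : Y) ∈ U ∩ C :=
          ⟨by simpa only [mem_preimage, Phi_tail] using hv, (h n q).2⟩
        rw [hUC, mem_singleton_iff] at hmem
        exact hex ⟨q, hmem⟩
      · show w (some n) ∈ U
        have : w (some n) ∈ U ∩ C := by rw [hUC]; rfl
        exact this.1
  · refine ⟨(fun v => v (some n)) ⁻¹' Cᶜ, ?_, (isOpen_compl_iff.mpr hCc).preimage
      (continuous_apply (some n)), hwC⟩
    rintro v hv ⟨q, rfl⟩
    refine hv ?_
    show Phi h n q (some n) ∈ C
    rw [Phi_tail]
    exact (h n q).2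

lemma discrete_range_Phi (h : ∀ n, Pt D M n ↪ ↥C) (hCd : DiscreteTopology ↥C) (n : ℕ) :
    DiscreteTopology ↥(range (Phi h n)) := by
  rw [discreteTopology_iff_isOpen_singleton]
  rintro ⟨w, hwmem⟩
  obtain ⟨p, rfl⟩ := hwmem
  obtain ⟨U, hU, hUC⟩ := ESep.exists_isolating hCd (h n p)
  rw [isOpen_induced_iff]
  refine ⟨(fun v => v (some n)) ⁻¹' U, hU.preimage (continuous_apply (some n)), ?_⟩
  ext ⟨v, hv⟩
  obtain ⟨q, rfl⟩ := hv
  simp only [mem_preimage, mem_singleton_iff, Subtype.mk.injEq]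
  constructor
  · intro hq
    have hmem : (h n q : Y) ∈ U ∩ C := ⟨by rwa [Phi_tail] at hq, (h n q).2⟩
    rw [hUC, mem_singleton_iff] at hmem
    have : q = p := (h n).injective (Subtype.val_injective hmem)
    rw [this]
  · intro hqp
    have : q = p := Phi_injective h n (congrArg Subtype.val hqp)
    subst this
    show Phi h n q (some n) ∈ U
    rw [Phi_tail]
    have : (h n q : Y) ∈ U ∩ C := by rw [hUC]; rfl
    exact this.1

lemma dense_restricted_union (h : ∀ n, Pt D M n ↪ ↥C) (hM : M.Nonempty)
    (hMdense : Dense M) (hMD : M ⊆ D) :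
    Dense (⋃ n, Phi h n '' {p : Pt D M n | (p.1 : Y) ∈ M}) := by
  rw [dense_iff_inter_open]
  rintro O hO ⟨w, hw⟩
  obtain ⟨I, u, hu, hsub⟩ := isOpen_pi_iff.mp hO w hw
  set n : ℕ := I.sup (fun o => Option.elim o 0 Nat.succ) with hn
  have hlt : ∀ i : ℕ, some i ∈ I → i < n := by
    intro i hi
    have h1 := Finset.le_sup (f := fun o : Option ℕ => Option.elim o 0 Nat.succ) hi
    rw [hn]
    exact h1
  have hg : ∀ o : Option ℕ, ∃ y, y ∈ M ∧ (o ∈ I → y ∈ u o) := by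
    intro o
    by_cases ho : o ∈ I
    · have huo : (u o ∩ M).Nonempty :=
        dense_iff_inter_open.mp hMdense (u o) (hu o ho).1 ⟨w o, (hu o ho).2⟩
      obtain ⟨y, hy1, hy2⟩ := huo
      exact ⟨y, hy2, fun _ => hy1⟩
    · exact ⟨hM.some, hM.some_mem, fun hmem => absurd hmem ho⟩
  choose g hgM hgu using hg
  refine ⟨Phi h n ⟨⟨g none, hMD (hgM none)⟩, fun i => ⟨g (some i), hgM _⟩⟩, ?_, ?_⟩
  · apply hsub
    rw [Set.mem_pi]
    intro o ho
    match o with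
    | none => exact hgu none ho
    | some i =>
      have hi : i < n := hlt i ho
      exact (congrArg (· ∈ u (some i)) ((Phi_some h n _ i).trans (dif_pos hi))).mpr (hgu (some i) ho)
  · rw [mem_iUnion]
    exact ⟨n, ⟨⟨⟨g none, hMD (hgM none)⟩, fun i => ⟨g (some i), hgM _⟩⟩, hgM none, rfl⟩⟩

end Construction

end ESep


lemma ESep.mk_iUnion_nat_le {W : Type u} (A : ℕ → Set W) {c : Cardinal.{u}} (hc : ℵ₀ ≤ c)
    (hA : ∀ n, #↥(A n) ≤ c) : #↥(⋃ n, A n) ≤ c := by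
  have hre : (⋃ n, A n) = ⋃ m : ULift.{u} ℕ, A m.down := by
    ext x
    simp only [mem_iUnion]
    exact ⟨fun ⟨n, hn⟩ => ⟨⟨n⟩, hn⟩, fun ⟨m, hm⟩ => ⟨m.down, hm⟩⟩
  rw [hre]
  calc #↥(⋃ m : ULift.{u} ℕ, A m.down)
      ≤ #(ULift.{u} ℕ) * ⨆ m : ULift.{u} ℕ, #↥(A m.down) := Cardinal.mk_iUnion_le _
    _ ≤ ℵ₀ * c := mul_le_mul' (le_of_eq (by simp [Cardinal.mk_uLift]))
        (ciSup_le' fun m => hA m.down)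
    _ = c := Cardinal.mul_eq_right hc hc Cardinal.aleph0_ne_zero

/- ### Main theorem -/

/-- If `D` is dense in `X^κ` and `X^κ` has a closed discrete subset of size `|D|`,
then there is a dense `E ⊆ X^κ` with `|E| = |D|`, `d(E) = d(D)` (as subspaces),
and `E` a countable union of closed discrete subsets of `X^κ`. -/
theorem exists_sigmaClosedDiscrete_dense_of_closedDiscrete {X : Type u} [TopologicalSpace X]
    [T1Space X] (κ : Cardinal.{u}) (hκ : ℵ₀ ≤ κ)
    (D : Set (κ.out → X)) (hD : Dense D)
    (h : ∃ C : Set (κ.out → X), ClosedDiscrete C ∧ #C = #D) :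
    ∃ E : Set (κ.out → X), Dense E ∧ #E = #D ∧ density ↥E = density ↥D ∧
      ∃ F : ℕ → Set (κ.out → X), (∀ n, ClosedDiscrete (F n)) ∧ E = ⋃ n, F n := by
  classical
  by_cases hDfin : D.Finite
  · -- Degenerate case: `D` finite, hence closed, hence the whole (finite discrete) space.
    have hDc : IsClosed D := hDfin.isClosed
    have hDuniv : D = (Set.univ : Set (κ.out → X)) := by
      rw [← hD.closure_eq, hDc.closure_eq]
    haveI : Finite (κ.out → X) := Set.finite_univ_iff.mp (hDuniv ▸ hDfin)
    haveI : DiscreteTopology (κ.out → X) := inferInstance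
    exact ⟨D, hD, rfl, rfl, fun _ => D,
      fun _ => ⟨isClosed_discrete D, inferInstance⟩, (iUnion_const D).symm⟩
  · -- Main case
    obtain ⟨C, ⟨hCc, hCd⟩, hCD⟩ := h
    have hDinf : D.Infinite := hDfin
    haveI : Infinite ↥D := hDinf.to_subtype
    have hDale : ℵ₀ ≤ #↥D := Cardinal.aleph0_le_mk ↥D
    obtain ⟨S, hS, hScard⟩ := ESep.exists_dense_card_density ↥D
    set μ := density ↥D with hμ
    set M : Set (κ.out → X) := Subtype.val '' S with hM
    have hMD : M ⊆ D := by
      rintro y ⟨⟨y, hy⟩, _, rfl⟩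
      exact hy
    have hMcard : #↥M = μ := by
      rw [hM, mk_image_eq Subtype.val_injective, hScard]
    have hμinf : ℵ₀ ≤ μ := by
      rw [← hScard]
      exact ESep.aleph0_le_card_dense hS
    have hMdense : Dense M := by
      have h1 : D ⊆ closure M := fun d hd => by
        have h2 : (⟨d, hd⟩ : ↥D) ∈ closure S := hS _
        rw [closure_subtype] at h2
        exact h2
      intro x
      have h3 := closure_mono h1
      rw [closure_closure] at h3
      exact h3 (hD x)
    have hMne : M.Nonempty := (hS.nonempty).image _
    -- embeddings of the index types into `C`
    have hcard_le : ∀ n, #(ESep.Pt D M n) ≤ #↥C := by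
      intro n
      calc #(ESep.Pt D M n) = #↥D * #(Fin n → ↥M) := by
            show #(↥D × (Fin n → ↥M)) = _
            rw [Cardinal.mk_prod, Cardinal.lift_id, Cardinal.lift_id]
        _ ≤ #↥D * #↥D :=
            mul_le_mul' le_rfl (ESep.card_fun_le n hDale (mk_le_mk_of_subset hMD))
        _ = #↥D := Cardinal.mul_eq_self hDale
        _ = #↥C := hCD.symm
    let hE : ∀ n, ESep.Pt D M n ↪ ↥C := fun n =>
      Classical.choice ((Cardinal.le_def _ _).mp (hcard_le n))
    -- the pieces
    have hGF : ∀ n, (ESep.Phi hE n '' {p : ESep.Pt D M n | (p.1 : κ.out → X) ∈ M})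
        ⊆ range (ESep.Phi hE n) := fun n => image_subset_range _ _
    have hGdense : Dense (⋃ n, ESep.Phi hE n '' {p : ESep.Pt D M n | (p.1 : κ.out → X) ∈ M}) :=
      ESep.dense_restricted_union hE hMne hMdense hMD
    have hEWdense : Dense (⋃ n, range (ESep.Phi hE n)) := hGdense.mono (iUnion_mono hGF)
    have hFcard : ∀ n, #↥(range (ESep.Phi hE n)) ≤ #↥D := fun n =>
      mk_range_le.trans ((hcard_le n).trans_eq hCD)
    have hEWcard : #↥(⋃ n, range (ESep.Phi hE n)) = #↥D := by
      apply le_antisymm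
      · exact ESep.mk_iUnion_nat_le _ hDale hFcard
      · have h1 : #↥(range (ESep.Phi hE 0)) = #(ESep.Pt D M 0) :=
          Cardinal.mk_range_eq _ (ESep.Phi_injective hE 0)
        have h2 : #(ESep.Pt D M 0) = #↥D := by
          show #(↥D × (Fin 0 → ↥M)) = #↥D
          have hone : #(Fin 0 → ↥M) = 1 := Cardinal.mk_eq_one _
          rw [Cardinal.mk_prod, Cardinal.lift_id, Cardinal.lift_id, hone, mul_one]
        calc #↥D = #↥(range (ESep.Phi hE 0)) := (h1.trans h2).symm
          _ ≤ _ := mk_le_mk_of_subset (subset_iUnion (fun n => range (ESep.Phi hE n)) 0)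
    -- density bounds
    have hGcard : ∀ n, #↥(ESep.Phi hE n '' {p : ESep.Pt D M n | (p.1 : κ.out → X) ∈ M}) ≤ μ := by
      intro n
      have hj : Function.Injective
          (fun q : ↥{p : ESep.Pt D M n | (p.1 : κ.out → X) ∈ M} =>
            ((⟨(q.1.1 : κ.out → X), q.2⟩ : ↥M), q.1.2)) := by
        rintro ⟨⟨⟨d1, hd1⟩, f1⟩, hm1⟩ ⟨⟨⟨d2, hd2⟩, f2⟩, hm2⟩ heq
        have h1 : d1 = d2 := congrArg (fun x => (x.1 : κ.out → X)) heq
        have h2 : f1 = f2 := congrArg Prod.snd heq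
        subst h1
        subst h2
        rfl
      have hle : #↥{p : ESep.Pt D M n | (p.1 : κ.out → X) ∈ M} ≤ #(↥M × (Fin n → ↥M)) :=
        Cardinal.mk_le_of_injective hj
      have hprod : #(↥M × (Fin n → ↥M)) ≤ μ := by
        rw [Cardinal.mk_prod, Cardinal.lift_id, Cardinal.lift_id, hMcard]
        calc μ * #(Fin n → ↥M) ≤ μ * μ :=
            mul_le_mul' le_rfl (ESep.card_fun_le n hμinf (le_of_eq hMcard))
          _ = μ := Cardinal.mul_eq_self hμinf
      exact Cardinal.mk_image_le.trans (hle.trans hprod)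
    have hdEW_le : density ↥(⋃ n, range (ESep.Phi hE n)) ≤ μ := by
      have hsub : (⋃ n, ESep.Phi hE n '' {p : ESep.Pt D M n | (p.1 : κ.out → X) ∈ M})
          ⊆ ⋃ n, range (ESep.Phi hE n) := iUnion_mono hGF
      have hdense' := ESep.dense_val_preimage hsub hGdense
      refine (ESep.density_le_of_dense hdense').trans ?_
      refine (Cardinal.mk_preimage_of_injective _ _ Subtype.val_injective).trans ?_
      exact ESep.mk_iUnion_nat_le _ hμinf hGcard
    have hnoneD : ∀ w ∈ (⋃ n, range (ESep.Phi hE n)), w none ∈ D := by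
      intro w hw
      simp only [mem_iUnion, mem_range] at hw
      obtain ⟨n, p, rfl⟩ := hw
      exact p.1.2
    have hdD_le : density ↥D ≤ density ↥(⋃ n, range (ESep.Phi hE n)) := by
      obtain ⟨T, hT, hTcard⟩ := ESep.exists_dense_card_density ↥(⋃ n, range (ESep.Phi hE n))
      let ρ : ↥(⋃ n, range (ESep.Phi hE n)) → ↥D := fun w =>
        ⟨(w : Option ℕ → κ.out → X) none, hnoneD _ w.2⟩
      have hρdense : Dense (ρ '' T) := by
        intro d
        rw [closure_subtype]
        have him : Subtype.val '' (ρ '' T)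
            = (fun w : Option ℕ → κ.out → X => w none) '' (Subtype.val '' T) := by
          rw [image_image, image_image]
        rw [him]
        have hwEW : ESep.Phi hE 0 ⟨d, fun i => i.elim0⟩ ∈ ⋃ n, range (ESep.Phi hE n) :=
          mem_iUnion.mpr ⟨0, ⟨_, rfl⟩⟩
        have h1 : (⟨_, hwEW⟩ : ↥(⋃ n, range (ESep.Phi hE n))) ∈ closure T := hT _
        rw [closure_subtype] at h1
        have h2 := image_closure_subset_closure_image
          (f := fun w : Option ℕ → κ.out → X => w none) (continuous_apply none)
          (mem_image_of_mem _ h1)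
        exact h2
      calc density ↥D ≤ #↥(ρ '' T) := ESep.density_le_of_dense hρdense
        _ ≤ #↥T := Cardinal.mk_image_le
        _ = _ := hTcard
    have hdEW : density ↥(⋃ n, range (ESep.Phi hE n)) = density ↥D :=
      le_antisymm hdEW_le hdD_le
    -- the homeomorphism `(Option ℕ → κ.out → X) ≃ₜ (κ.out → X)`
    have hcardEq : #(Option ℕ × κ.out) = #κ.out := by
      rw [Cardinal.mk_prod, Cardinal.lift_uzero, Cardinal.mk_out,
        Cardinal.mk_eq_aleph0 (Option ℕ), Cardinal.lift_aleph0]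
      exact Cardinal.mul_eq_right hκ hκ Cardinal.aleph0_ne_zero
    let e : (Option ℕ × κ.out) ≃ κ.out := Classical.choice (Cardinal.eq.mp hcardEq)
    let A : ((Option ℕ × κ.out) → X) ≃ₜ (κ.out → X) :=
      Homeomorph.piCongrLeft (Y := fun _ : κ.out => X) e
    let B : ((Option ℕ × κ.out) → X) ≃ₜ (Option ℕ → κ.out → X) :=
      { toEquiv := Equiv.curry _ _ _
        continuous_toFun := continuous_pi fun o => continuous_pi fun i => continuous_apply (o, i)
        continuous_invFun := continuous_pi fun p => (continuous_apply p.2).comp (continuous_apply p.1) }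
    let φ : (Option ℕ → κ.out → X) ≃ₜ (κ.out → X) := B.symm.trans A
    refine ⟨φ '' (⋃ n, range (ESep.Phi hE n)), ?_, ?_, ?_, fun n => φ '' range (ESep.Phi hE n),
      ?_, ?_⟩
    · rw [dense_iff_closure_eq, ← φ.image_closure, hEWdense.closure_eq, image_univ,
        φ.surjective.range_eq]
    · exact (mk_image_eq φ.injective).trans hEWcard
    · exact (ESep.density_eq_of_homeomorph (Homeomorph.image φ _)).symm.trans hdEW
    · intro n
      refine ⟨(φ.isClosed_image).mpr (ESep.isClosed_range_Phi hE hCc hCd n), ?_⟩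
      haveI := ESep.discrete_range_Phi hE hCd n
      exact ((Homeomorph.image φ (range (ESep.Phi hE n))).symm.isEmbedding).discreteTopology
    · rw [image_iUnion]
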